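/- arXiv:2002.05580 — 3 statements merged into one kernel-verified Lean document; each statement's English description precedes it below -/
import Mathlib

section
/- A finite simple graph G with at least two vertices admits a straight-line drawing in the plane (an injective map from vertices to points in ℝ²) with spanning ratio equal to 1 — i.e., for every pair of vertices u, v there is a path in G whose total Euclidean edge length equals the Euclidean distance between the images of u and v — if and only if G contains a Hamiltonian path. -/
/-- The Euclidean length of a walk under a straight-line drawing `ρ`. -/
noncomputable def wlen {V : Type*} {G : SimpleGraph V} (ρ : V → EuclideanSpace ℝ (Fin 2)) :
    ∀ {u v : V}, G.Walk u v → ℝ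
  | _, _, SimpleGraph.Walk.nil => 0
  | u, _, SimpleGraph.Walk.cons (v := b) _ p => dist (ρ u) (ρ b) + wlen ρ p

section
variable {V : Type*} {G : SimpleGraph V} (ρ : V → EuclideanSpace ℝ (Fin 2))

@[simp] lemma wlen_nil {u : V} : wlen ρ (SimpleGraph.Walk.nil : G.Walk u u) = 0 := rfl

@[simp] lemma wlen_cons {u b v : V} (h : G.Adj u b) (p : G.Walk b v) :
    wlen ρ (SimpleGraph.Walk.cons h p) = dist (ρ u) (ρ b) + wlen ρ p := rfl

lemma wlen_append : ∀ {u v w : V} (p : G.Walk u v) (q : G.Walk v w),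
    wlen ρ (p.append q) = wlen ρ p + wlen ρ q
  | _, _, _, .nil, q => by simp
  | _, _, _, .cons h p, q => by simp [wlen_append p q]; ring

lemma wlen_reverse : ∀ {u v : V} (p : G.Walk u v), wlen ρ p.reverse = wlen ρ p
  | _, _, .nil => rfl
  | _, _, .cons h p => by
      simp [SimpleGraph.Walk.reverse_cons, wlen_append, wlen_reverse p, dist_comm]
      ring

lemma dist_le_wlen : ∀ {u v : V} (p : G.Walk u v), dist (ρ u) (ρ v) ≤ wlen ρ p
  | _, _, .nil => by simp
  | u, v, .cons (v := b) h p => by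
      calc dist (ρ u) (ρ v) ≤ dist (ρ u) (ρ b) + dist (ρ b) (ρ v) := dist_triangle _ _ _
        _ ≤ _ := by simpa using dist_le_wlen p

end

section
variable {V : Type*} {G : SimpleGraph V} {ρ : V → EuclideanSpace ℝ (Fin 2)} {x : V → ℝ}

lemma le_of_mem_support : ∀ {a b : V} (p : G.Walk a b),
    p.support.Chain' (fun s t => x t = x s + 1) → ∀ v ∈ p.support, x a ≤ x v
  | _, _, .nil, _, v, hv => by
      simp only [SimpleGraph.Walk.support_nil, List.mem_singleton] at hv; subst hv; exact le_refl _
  | a, b, .cons (v := c) h p, hc, v, hv => by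
      rw [SimpleGraph.Walk.support_cons, p.support_eq_cons, List.Chain', List.isChain_cons_cons] at hc
      rw [← p.support_eq_cons] at hc
      rw [SimpleGraph.Walk.support_cons, List.mem_cons] at hv
      rcases hv with rfl | hv
      · exact le_refl _
      · have := le_of_mem_support p hc.2 v hv
        have hac : x c = x a + 1 := hc.1
        linarith

lemma exists_walk_wlen_of_le (hd : ∀ a b : V, dist (ρ a) (ρ b) = |x a - x b|) :
    ∀ {a b : V} (p : G.Walk a b),
    p.support.Chain' (fun s t => x t = x s + 1) →
    ∀ u v, u ∈ p.support → v ∈ p.support → x u ≤ x v →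
    ∃ q : G.Walk u v, wlen ρ q = x v - x u
  | _, _, .nil, _, u, v, hu, hv, _ => by
      simp only [SimpleGraph.Walk.support_nil, List.mem_singleton] at hu hv
      subst hu; subst hv
      exact ⟨.nil, by simp⟩
  | a, b, .cons (v := c) h p, hc, u, v, hu, hv, huv => by
      rw [SimpleGraph.Walk.support_cons, p.support_eq_cons, List.Chain', List.isChain_cons_cons] at hc
      rw [← p.support_eq_cons] at hc
      obtain ⟨hac, hc'⟩ := hc
      rw [SimpleGraph.Walk.support_cons, List.mem_cons] at hu hv
      have hcs : c ∈ p.support := p.start_mem_support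
      rcases hu with rfl | hu
      · rcases hv with rfl | hv
        · exact ⟨.nil, by simp⟩
        · have hcv : x c ≤ x v := le_of_mem_support p hc' v hv
          obtain ⟨q, hq⟩ := exists_walk_wlen_of_le hd p hc' c v hcs hv hcv
          refine ⟨.cons h q, ?_⟩
          rw [wlen_cons, hq, hd]
          rw [hac]; rw [abs_of_nonpos (by linarith)]; ring
      · rcases hv with rfl | hv
        · exfalso
          have hcu : x c ≤ x u := le_of_mem_support p hc' u hu
          linarith
        · exact exists_walk_wlen_of_le hd p hc' u v hu hv huv

end

lemma indexOf_get_self {α : Type*} [DecidableEq α] {l : List α} (hnd : l.Nodup)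
    (i : Fin l.length) : l.idxOf (l.get i) = i := by
  have hm : l.get i ∈ l := l.get_mem _
  have hlt : l.idxOf (l.get i) < l.length := List.idxOf_lt_length_iff.2 hm
  have : l.get ⟨l.idxOf (l.get i), hlt⟩ = l.get i := List.idxOf_get hlt
  have := (hnd.get_inj_iff).mp this
  exact congrArg Fin.val this

lemma backward_dir {V : Type*} [Fintype V] [DecidableEq V] (G : SimpleGraph V)
    (hham : ∃ (u v : V) (p : G.Walk u v), p.IsHamiltonian) :
    ∃ ρ : V → EuclideanSpace ℝ (Fin 2), Function.Injective ρ ∧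
      ∀ u v : V, ∃ p : G.Walk u v, wlen ρ p = dist (ρ u) (ρ v) := by
  classical
  obtain ⟨u0, v0, p, hp⟩ := hham
  have hmem : ∀ v, v ∈ p.support := fun v =>
    List.count_pos_iff.mp (by rw [hp v]; norm_num)
  have hnd : p.support.Nodup := by
    rw [List.nodup_iff_count_le_one]; intro a; rw [hp a]
  set x : V → ℝ := fun v => (p.support.idxOf v : ℝ) with hx
  set ρ : V → EuclideanSpace ℝ (Fin 2) :=
    fun v => x v • EuclideanSpace.single (0 : Fin 2) (1 : ℝ) with hρ
  have hd : ∀ a b, dist (ρ a) (ρ b) = |x a - x b| := by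
    intro a b
    rw [hρ]
    simp only [dist_eq_norm, ← sub_smul, norm_smul, EuclideanSpace.norm_single,
      Real.norm_eq_abs, norm_one, mul_one]
  have hxinj : ∀ a b : V, x a = x b → a = b := by
    intro a b hab
    have : p.support.idxOf a = p.support.idxOf b := Nat.cast_injective hab
    exact (List.idxOf_inj (hmem a)).mp this
  have hinj : Function.Injective ρ := by
    intro a b hab
    apply hxinj
    have : dist (ρ a) (ρ b) = 0 := by rw [hab, dist_self]
    rw [hd] at this
    have := abs_eq_zero.mp this
    linarith
  have hchain : p.support.Chain' (fun s t => x t = x s + 1) := by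
    rw [List.Chain', List.isChain_iff_getElem]
    intro i hi
    have h1 : x (p.support.get ⟨i, by omega⟩) = i := by
      simp only [hx]; rw [indexOf_get_self hnd]
    have h2 : x (p.support.get ⟨i + 1, by omega⟩) = i + 1 := by
      simp only [hx]; rw [indexOf_get_self hnd]; push_cast; ring
    change x (p.support.get ⟨i + 1, by omega⟩) = x (p.support.get ⟨i, by omega⟩) + 1
    rw [h1, h2]
  refine ⟨ρ, hinj, fun u v => ?_⟩
  rcases le_total (x u) (x v) with huv | huv
  · obtain ⟨q, hq⟩ := exists_walk_wlen_of_le hd p hchain u v (hmem u) (hmem v) huv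
    exact ⟨q, by rw [hq, hd, abs_of_nonpos (by linarith)]; ring⟩
  · obtain ⟨q, hq⟩ := exists_walk_wlen_of_le hd p hchain v u (hmem v) (hmem u) huv
    exact ⟨q.reverse, by rw [wlen_reverse, hq, hd, abs_of_nonneg (by linarith)]⟩

lemma walk_of_chain {V : Type*} {G : SimpleGraph V} :
    ∀ (l : List V) (a : V), List.Chain G.Adj a l →
      ∃ (b : V) (w : G.Walk a b), w.support = a :: l
  | [], a, _ => ⟨a, .nil, by simp⟩
  | c :: l, a, h => by
      rw [List.Chain, List.isChain_cons_cons] at h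
      obtain ⟨b, w, hw⟩ := walk_of_chain l c h.2
      exact ⟨b, .cons h.1 w, by simp [hw]⟩

lemma forward_dir {V : Type*} [Fintype V] [DecidableEq V] (G : SimpleGraph V)
    (hn : 2 ≤ Fintype.card V)
    (h : ∃ ρ : V → EuclideanSpace ℝ (Fin 2), Function.Injective ρ ∧
      ∀ u v : V, ∃ p : G.Walk u v, wlen ρ p = dist (ρ u) (ρ v)) :
    ∃ (u v : V) (p : G.Walk u v), p.IsHamiltonian := by
  classical
  obtain ⟨ρ, hρ, hgeo⟩ := h
  set S : Finset ℝ :=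
    Finset.image (fun q : V × V => -(ρ q.1 0 - ρ q.2 0) / (ρ q.1 1 - ρ q.2 1)) Finset.univ with hS
  obtain ⟨t, ht⟩ := Infinite.exists_notMem_finset S
  set f : EuclideanSpace ℝ (Fin 2) → ℝ := fun q => q 0 + t * q 1 with hf
  have hfinj : Function.Injective (fun v => f (ρ v)) := by
    intro a b hab
    have hab' : ρ a 0 + t * ρ a 1 = ρ b 0 + t * ρ b 1 := hab
    by_cases h1 : ρ a 1 = ρ b 1
    · have h0 : ρ a 0 = ρ b 0 := by rw [h1] at hab'; linarith
      apply hρ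
      ext i
      fin_cases i
      · exact h0
      · exact h1
    · exfalso
      apply ht
      rw [hS]
      refine Finset.mem_image.mpr ⟨(a, b), Finset.mem_univ _, ?_⟩
      have hne : ρ a 1 - ρ b 1 ≠ 0 := sub_ne_zero.mpr h1
      field_simp
      linarith
  have key : ∀ u v : V, u ≠ v → f (ρ u) < f (ρ v) →
      (∀ w : V, w ≠ u → w ≠ v → ¬(f (ρ u) < f (ρ w) ∧ f (ρ w) < f (ρ v))) → G.Adj u v := by
    intro u v hune hfuv hbet
    obtain ⟨q, hq⟩ := hgeo u v
    cases q with
    | nil => exact absurd rfl hune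
    | @cons _ w _ h' q' =>
      by_cases hwv : w = v
      · subst hwv; exact h'
      · exfalso
        rw [wlen_cons] at hq
        have hb2 := dist_le_wlen ρ q'
        have hb3 := dist_triangle (ρ u) (ρ w) (ρ v)
        have heq : dist (ρ u) (ρ w) + dist (ρ w) (ρ v) = dist (ρ u) (ρ v) := by linarith
        have hwb : Wbtw ℝ (ρ u) (ρ w) (ρ v) := dist_add_dist_eq_iff.mp heq
        obtain ⟨s, r', hs, hr', hsr, hws⟩ := mem_segment_iff_wbtw.mpr hwb
        have hfw : f (ρ w) = s * f (ρ u) + r' * f (ρ v) := by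
          rw [← hws]
          simp only [hf, PiLp.add_apply, PiLp.smul_apply, smul_eq_mul]
          ring
        have hwu : w ≠ u := fun e => G.irrefl (e ▸ h')
        have hfwu : f (ρ w) ≠ f (ρ u) := fun e => hwu (hfinj e)
        have hfwv : f (ρ w) ≠ f (ρ v) := fun e => hwv (hfinj e)
        have hs' : s = 1 - r' := by linarith
        have hfw' : f (ρ w) = (1 - r') * f (ρ u) + r' * f (ρ v) := by rw [← hs']; exact hfw
        refine hbet w hwu hwv ⟨?_, ?_⟩
        · rcases eq_or_lt_of_le (show f (ρ u) ≤ f (ρ w) by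
            nlinarith [mul_nonneg hr' (sub_nonneg.mpr hfuv.le), hfw']) with e | e
          · exact absurd e.symm hfwu
          · exact e
        · rcases eq_or_lt_of_le (show f (ρ w) ≤ f (ρ v) by
            nlinarith [mul_nonneg hs (sub_nonneg.mpr hfuv.le), hfw', hs']) with e | e
          · exact absurd e hfwv
          · exact e
  -- sorted list of vertices
  set r : V → V → Prop := fun a b => f (ρ a) ≤ f (ρ b) with hr
  letI : DecidableRel r := fun a b => Classical.dec _
  haveI : IsTrans V r := ⟨fun a b c hab hbc => le_trans hab hbc⟩
  haveI : IsAntisymm V r := ⟨fun a b h1 h2 => hfinj (le_antisymm h1 h2)⟩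
  haveI : IsTotal V r := ⟨fun a b => le_total _ _⟩
  set L : List V := Finset.univ.sort r with hL
  have hLs : L.Pairwise r := Finset.pairwise_sort _ r
  have hLn : L.Nodup := Finset.sort_nodup _ r
  have hLm : ∀ v : V, v ∈ L := fun v => (Finset.mem_sort r).mpr (Finset.mem_univ v)
  have hst : ∀ i j : Fin L.length, i < j → f (ρ (L.get i)) < f (ρ (L.get j)) := by
    intro i j hij
    have hle : r (L.get i) (L.get j) := List.pairwise_iff_get.mp hLs i j hij
    have hne : L.get i ≠ L.get j := fun e => absurd (hLn.get_inj_iff.mp e) (Fin.ne_of_lt hij)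
    exact lt_of_le_of_ne hle (fun e => hne (hfinj e))
  have hadj : ∀ (i : ℕ) (hi : i < L.length - 1),
      G.Adj (L.get ⟨i, by omega⟩) (L.get ⟨i + 1, by omega⟩) := by
    intro i hi
    have hfuv : f (ρ (L.get ⟨i, by omega⟩)) < f (ρ (L.get ⟨i + 1, by omega⟩)) :=
      hst _ _ (by simp)
    refine key _ _ (fun e => absurd (congrArg (fun z => f (ρ z)) e) (ne_of_lt hfuv)) hfuv ?_
    rintro w hwu hwv ⟨h1, h2⟩
    obtain ⟨k, hk⟩ := List.mem_iff_get.mp (hLm w)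
    have hfwu : f (ρ w) ≠ f (ρ (L.get ⟨i, by omega⟩)) := ne_of_gt h1
    have hfwv : f (ρ w) ≠ f (ρ (L.get ⟨i + 1, by omega⟩)) := ne_of_lt h2
    have hik : (⟨i, by omega⟩ : Fin L.length) < k := by
      by_contra hc
      push_neg at hc
      rcases lt_or_eq_of_le hc with hlt | heq'
      · exact absurd (hst _ _ hlt) (by rw [hk]; exact not_lt.mpr h1.le)
      · exact hfwu (by rw [← hk, heq'])
    have hki : k < (⟨i + 1, by omega⟩ : Fin L.length) := by
      by_contra hc
      push_neg at hc
      rcases lt_or_eq_of_le hc with hlt | heq'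
      · exact absurd (hst _ _ hlt) (by rw [hk]; exact not_lt.mpr h2.le)
      · exact hfwv (by rw [← hk, ← heq'])
    have hik' : (i : ℕ) < k.val := hik
    have hki' : (k.val : ℕ) < i + 1 := hki
    omega
  have hchain : L.Chain' G.Adj := List.isChain_iff_getElem.mpr (fun i hi => hadj i (by omega))
  have hlen : L.length = Fintype.card V := Finset.length_sort r
  have hne : L ≠ [] := by
    intro e; rw [e] at hlen; simp at hlen; omega
  obtain ⟨a, l, hal⟩ := List.exists_cons_of_ne_nil hne
  rw [hal] at hchain
  have hchain' : List.Chain G.Adj a l := hchain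
  obtain ⟨b, w, hw⟩ := walk_of_chain l a hchain'
  exact ⟨a, b, w, fun v => by
    rw [hw, ← hal]; exact List.count_eq_one_of_mem hLn (hLm v)⟩

/-- A graph with at least two vertices admits a straight-line drawing with spanning ratio 1
iff it contains a Hamiltonian path. -/
theorem drawing_spanning_ratio_one_iff_hamiltonianPath
    {V : Type*} [Fintype V] [DecidableEq V] (G : SimpleGraph V)
    (hn : 2 ≤ Fintype.card V) :
    (∃ ρ : V → EuclideanSpace ℝ (Fin 2), Function.Injective ρ ∧
      ∀ u v : V, ∃ p : G.Walk u v, wlen ρ p = dist (ρ u) (ρ v)) ↔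
    (∃ (u v : V) (p : G.Walk u v), p.IsHamiltonian) := by
  exact ⟨forward_dir G hn, backward_dir G⟩
end

section
/- If a straight-line drawing Γ of a connected graph G on n ≥ 2 vertices has the property that no two vertices share the same x-coordinate, and Γ has spanning ratio 1, then ordering the vertices v₁, …, vₙ by increasing x-coordinate, the edge vᵢvᵢ₊₁ belongs to G for every i = 1, …, n−1. -/
lemma wlen_ge {V : Type*} {G : SimpleGraph V} (ρ : V → EuclideanSpace ℝ (Fin 2)) :
    ∀ {u v : V} (p : G.Walk u v), dist (ρ u) (ρ v) ≤ wlen ρ p := by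
  intro u v p
  induction p with
  | nil => simp [wlen]
  | @cons a b c hadj q ih =>
    calc dist (ρ a) (ρ c) ≤ dist (ρ a) (ρ b) + dist (ρ b) (ρ c) := dist_triangle _ _ _
    _ ≤ dist (ρ a) (ρ b) + wlen ρ q := by linarith [ih]
    _ = wlen ρ (SimpleGraph.Walk.cons hadj q) := rfl

/-- If a straight-line drawing of a connected graph on `n ≥ 2` vertices has pairwise distinct
x-coordinates and spanning ratio 1, then consecutive vertices in the order of increasing
x-coordinate are adjacent. -/
theorem consecutive_by_x_adjacent
    {V : Type*} [Fintype V] (G : SimpleGraph V) (hG : G.Connected)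
    {n : ℕ} (hn : 2 ≤ n) (f : Fin n ≃ V)
    (ρ : V → EuclideanSpace ℝ (Fin 2)) (hinj : Function.Injective ρ)
    (hx : StrictMono (fun i : Fin n => ρ (f i) 0))
    (hspan : ∀ u v : V, ∃ p : G.Walk u v, wlen ρ p = dist (ρ u) (ρ v)) :
    ∀ (i : ℕ) (hi : i + 1 < n),
      G.Adj (f ⟨i, Nat.lt_of_succ_lt hi⟩) (f ⟨i + 1, hi⟩) := by
  intro i hi
  set i0 : Fin n := ⟨i, Nat.lt_of_succ_lt hi⟩ with hi0
  set i1 : Fin n := ⟨i + 1, hi⟩ with hi1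
  set u := f i0 with hu
  set v := f i1 with hv
  have hlt : (i0 : Fin n) < i1 := by simp [hi0, hi1, Fin.lt_def]
  have hxuv : ρ u 0 < ρ v 0 := hx hlt
  have hne : u ≠ v := fun h => by
    have := congrArg (fun w => ρ w 0) h
    simp at this; linarith
  obtain ⟨p, hp⟩ := hspan u v
  have hnn : ¬ p.Nil := SimpleGraph.Walk.not_nil_of_ne hne
  obtain ⟨b, hadj, q, rfl⟩ := SimpleGraph.Walk.not_nil_iff.mp hnn
  -- extract the equality dist u b + dist b v = dist u v
  have h1 : dist (ρ b) (ρ v) ≤ wlen ρ q := wlen_ge ρ q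
  have h2 : wlen ρ (SimpleGraph.Walk.cons hadj q) = dist (ρ u) (ρ b) + wlen ρ q := rfl
  have h3 : dist (ρ u) (ρ v) ≤ dist (ρ u) (ρ b) + dist (ρ b) (ρ v) := dist_triangle _ _ _
  have heq : dist (ρ u) (ρ b) + dist (ρ b) (ρ v) = dist (ρ u) (ρ v) := by
    rw [h2] at hp; linarith
  have hw : Wbtw ℝ (ρ u) (ρ b) (ρ v) := dist_add_dist_eq_iff.mp heq
  have hseg : ρ b ∈ segment ℝ (ρ u) (ρ v) := mem_segment_iff_wbtw.mpr hw
  obtain ⟨s, t, hs, ht, hst, hcomb⟩ := hseg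
  have hb0 : ρ b 0 = s * ρ u 0 + t * ρ v 0 := by
    have := congrFun (congrArg (fun z : EuclideanSpace ℝ (Fin 2) => (z : Fin 2 → ℝ)) hcomb) 0
    simpa [PiLp.add_apply, PiLp.smul_apply] using this.symm
  have hbIcc : ρ u 0 ≤ ρ b 0 ∧ ρ b 0 ≤ ρ v 0 := by
    have hs' : s = 1 - t := by linarith
    have hA : ρ b 0 - ρ u 0 = t * (ρ v 0 - ρ u 0) := by rw [hb0, hs']; ring
    have hB : ρ v 0 - ρ b 0 = s * (ρ v 0 - ρ u 0) := by rw [hb0, hs']; ring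
    constructor <;>
      linarith [mul_nonneg ht (sub_nonneg.mpr hxuv.le), mul_nonneg hs (sub_nonneg.mpr hxuv.le)]
  -- b corresponds to index j
  set j := f.symm b with hj
  have hfj : f j = b := f.apply_symm_apply b
  have hub : u ≠ b := hadj.ne
  have hji : i0 ≤ j := by
    by_contra hlt'
    push_neg at hlt'
    have := hx hlt'
    simp only [hfj] at this
    linarith [hbIcc.1]
  have hij : j ≤ i1 := by
    by_contra hlt'
    push_neg at hlt'
    have := hx hlt'
    simp only [hfj] at this
    linarith [hbIcc.2]
  have hji' : i0 ≠ j := by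
    intro h
    exact hub (by rw [hu, h, hfj])
  have hj1 : j = i1 := by
    have h1 : i0 < j := lt_of_le_of_ne hji hji'
    have h2 : (i0 : Fin n).val < j.val := h1
    have h3 : j.val ≤ (i1 : Fin n).val := hij
    apply Fin.ext
    simp only [hi0, hi1] at h2 h3 ⊢
    omega
  have hbv : b = v := by rw [← hfj, hj1, hv]
  exact hbv ▸ hadj
end

section
/- Let w : ℕ → ℝ≥0 satisfy w(1) = 0 and suppose for each n ≥ 2 there is a finite family of positive integers {n_{j,i}} with each n_{j,i} ≤ n/2 and Σ n_{j,i} ≤ n − 1, such that w(n) ≤ C · Σ_{j,i} w(n_{j,i}) + C·(n−1)·log₂ n, where C ≥ 1 is a constant. Then w(n) ≤ C^{log₂ n} · n² · log₂ n for all n ≥ 1. -/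
lemma sum_sq_le_sq_sum (s : Multiset ℕ) :
    (s.map (fun (m : ℕ) => ((m : ℝ)) ^ 2)).sum ≤ ((s.map (fun (m : ℕ) => (m : ℝ))).sum) ^ 2 := by
  induction s using Multiset.induction with
  | empty => norm_num
  | cons a s ih =>
    simp only [Multiset.map_cons, Multiset.sum_cons]
    have h1 : (0:ℝ) ≤ (a : ℝ) := by positivity
    have h2 : (0:ℝ) ≤ (s.map (fun (m : ℕ) => (m : ℝ))).sum := by
      apply Multiset.sum_nonneg; intro x hx
      obtain ⟨m, _, rfl⟩ := Multiset.mem_map.mp hx; positivity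
    nlinarith [ih]

/-- If `w 1 = 0`, `w` is nonnegative, and for each `n ≥ 2` there is a family of positive
integers `n_{j,i} ≤ n/2` with `Σ n_{j,i} ≤ n - 1` and
`w n ≤ C·Σ w(n_{j,i}) + C·(n-1)·log₂ n` for a constant `C ≥ 1`, then
`w n ≤ C^(log₂ n) · n² · log₂ n` for all `n ≥ 1`. -/
theorem width_recurrence_bound
    (w : ℕ → ℝ) (hpos : ∀ n, 0 ≤ w n) (h1 : w 1 = 0)
    (C : ℝ) (hC : 1 ≤ C)
    (hrec : ∀ n : ℕ, 2 ≤ n → ∃ s : Multiset ℕ,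
      (∀ m ∈ s, 0 < m ∧ (m : ℝ) ≤ (n : ℝ) / 2) ∧
      ((s.sum : ℝ) ≤ (n : ℝ) - 1) ∧
      w n ≤ C * (s.map w).sum + C * ((n : ℝ) - 1) * Real.logb 2 n) :
    ∀ n : ℕ, 1 ≤ n → w n ≤ C ^ (Real.logb 2 n) * (n : ℝ) ^ 2 * Real.logb 2 n := by
  have hC0 : (0:ℝ) < C := lt_of_lt_of_le one_pos hC
  intro n
  induction n using Nat.strong_induction_on with
  | _ n ih =>
    intro hn
    rcases eq_or_lt_of_le hn with h | h
    · rw [← h]; norm_num [h1]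
    · have hn2 : 2 ≤ n := h
      obtain ⟨s, hmem, hsum, hw⟩ := hrec n hn2
      set L := Real.logb 2 (n : ℝ) with hLdef
      have hn2R : (2:ℝ) ≤ (n : ℝ) := by exact_mod_cast hn2
      have hL1 : 1 ≤ L := by
        have := (Real.logb_le_logb (b := 2) (by norm_num) (by norm_num) (by linarith)).mpr hn2R
        simpa using this
      -- pointwise bound
      have hpt : ∀ m ∈ s, w m ≤ C ^ (L - 1) * L * (m : ℝ) ^ 2 := by
        intro m hm
        obtain ⟨hm0, hm2⟩ := hmem m hm
        have hmlt : m < n := by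
          have : (m : ℝ) < (n : ℝ) := lt_of_le_of_lt hm2 (by linarith)
          exact_mod_cast this
        have hm1 : 1 ≤ m := hm0
        have hm1R : (1:ℝ) ≤ (m : ℝ) := by exact_mod_cast hm1
        have hIH := ih m hmlt hm1
        have hlogm0 : 0 ≤ Real.logb 2 (m : ℝ) := Real.logb_nonneg (by norm_num) hm1R
        have hlogle : Real.logb 2 (m : ℝ) ≤ L - 1 := by
          have h2 : Real.logb 2 (m : ℝ) ≤ Real.logb 2 ((n : ℝ) / 2) :=
            (Real.logb_le_logb (b := 2) (by norm_num) (by linarith) (by linarith)).mpr hm2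
          have h3 : Real.logb 2 ((n : ℝ) / 2) = L - 1 := by
            rw [Real.logb_div (by linarith) (by norm_num)]
            simp [hLdef]
          linarith [h2, h3.symm.le]
        have hrp : C ^ (Real.logb 2 (m : ℝ)) ≤ C ^ (L - 1) :=
          Real.rpow_le_rpow_of_exponent_le hC hlogle
        have hrp1 : (1:ℝ) ≤ C ^ (Real.logb 2 (m : ℝ)) := Real.one_le_rpow hC hlogm0
        have hmsq : (0:ℝ) ≤ (m : ℝ) ^ 2 := by positivity
        have hlogL : Real.logb 2 (m : ℝ) ≤ L := by linarith
        have hax : C ^ (Real.logb 2 (m : ℝ)) * Real.logb 2 (m : ℝ) ≤ C ^ (L - 1) * L :=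
          mul_le_mul hrp hlogL hlogm0 (by positivity)
        calc w m ≤ C ^ (Real.logb 2 (m : ℝ)) * (m : ℝ) ^ 2 * Real.logb 2 (m : ℝ) := hIH
          _ ≤ C ^ (L - 1) * L * (m : ℝ) ^ 2 := by nlinarith [hax, hmsq]
      have hsum1 : (s.map w).sum ≤ (s.map (fun (m : ℕ) => C ^ (L - 1) * L * (m : ℝ) ^ 2)).sum :=
        Multiset.sum_map_le_sum_map _ _ hpt
      have hsum2 : (s.map (fun (m : ℕ) => C ^ (L - 1) * L * (m : ℝ) ^ 2)).sum
          = C ^ (L - 1) * L * (s.map (fun (m : ℕ) => ((m : ℝ)) ^ 2)).sum := by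
        rw [← Multiset.sum_map_mul_left]
      have hcast : (s.map (fun (m : ℕ) => (m : ℝ))).sum = ((s.sum : ℕ) : ℝ) := by
        simp [Nat.cast_multiset_sum]
      have hsq : (s.map (fun (m : ℕ) => ((m : ℝ)) ^ 2)).sum ≤ ((n : ℝ) - 1) ^ 2 := by
        refine le_trans (sum_sq_le_sq_sum s) ?_
        have h0 : (0:ℝ) ≤ ((s.sum : ℕ) : ℝ) := by positivity
        rw [hcast]
        nlinarith [hsum]
      have hCL : C * C ^ (L - 1) = C ^ L := by
        have hadd := Real.rpow_add hC0 1 (L - 1)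
        rw [Real.rpow_one] at hadd
        rw [← hadd]
        norm_num
      have hCle : C ≤ C ^ L := by
        calc C = C ^ (1:ℝ) := (Real.rpow_one C).symm
          _ ≤ C ^ L := Real.rpow_le_rpow_of_exponent_le hC hL1
      have hCLpos : (0:ℝ) < C ^ L := Real.rpow_pos_of_pos hC0 L
      have hkey : C * (s.map w).sum ≤ C ^ L * L * ((n:ℝ) - 1) ^ 2 := by
        calc C * (s.map w).sum
            ≤ C * (C ^ (L - 1) * L * (s.map (fun (m : ℕ) => ((m : ℝ)) ^ 2)).sum) :=
              mul_le_mul_of_nonneg_left (hsum1.trans_eq hsum2) hC0.le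
          _ = C ^ L * L * (s.map (fun (m : ℕ) => ((m : ℝ)) ^ 2)).sum := by
              rw [← hCL]; ring
          _ ≤ C ^ L * L * ((n:ℝ) - 1) ^ 2 := by
              apply mul_le_mul_of_nonneg_left hsq
              positivity
      have hLnn : (0:ℝ) ≤ L := by linarith
      have h0 : (0:ℝ) ≤ ((n:ℝ) - 1) * L := by nlinarith
      have hA : C * ((n:ℝ) - 1) * L ≤ C ^ L * ((n:ℝ) - 1) * L := by
        nlinarith [mul_le_mul_of_nonneg_right hCle h0]
      have hB : C ^ L * L * ((n:ℝ) - 1) ^ 2 + C ^ L * ((n:ℝ) - 1) * L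
          ≤ C ^ L * (n:ℝ) ^ 2 * L := by
        nlinarith [mul_nonneg (mul_nonneg hCLpos.le hLnn) (by positivity : (0:ℝ) ≤ (n:ℝ))]
      linarith [hw, hkey, hA, hB]
end
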